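/- Let g_n satisfy the weak truncated formulation. Then for every t ≥ 0 one has ∫₀ⁿ y·g_n(y,t) dy ≤ ∫₀ⁿ y·g_n^in(y) dy, i.e. the first moment of the truncated non-conservative solution is bounded by the initial first moment. -/

import Mathlib

open MeasureTheory

/-- Indicator (characteristic) function of the interval `(a, b)`. -/
noncomputable def chi (a b : ℝ) : ℝ → ℝ := Set.indicator (Set.Ioo a b) 1

lemma chi_of_mem {a b y : ℝ} (h : y ∈ Set.Ioo a b) : chi a b y = 1 :=
  Set.indicator_of_mem h 1

lemma chi_nonneg (a b y : ℝ) : 0 ≤ chi a b y :=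
  Set.indicator_nonneg (fun _ _ => zero_le_one) y

lemma chi_le_one (a b y : ℝ) : chi a b y ≤ 1 := by
  unfold chi; by_cases h : y ∈ Set.Ioo a b <;> simp [h]

lemma chi_sq (a b y : ℝ) : chi a b y * chi a b y = chi a b y := by
  unfold chi; by_cases h : y ∈ Set.Ioo a b <;> simp [h]

lemma chi_measurable (a b : ℝ) : Measurable (chi a b) :=
  measurable_one.indicator measurableSet_Ioo

/-- Inequality (tncfe2): the first moment of the truncated non-conservative
solution is bounded by the initial first moment. -/
theorem moment_bound
    (K F : ℝ → ℝ → ℝ) (k₁ k₂ : ℝ) (hk₁ : 0 < k₁) (hk₂ : 0 < k₂)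
    (hK_meas : Measurable (Function.uncurry K)) (hF_meas : Measurable (Function.uncurry F))
    (hK_nonneg : ∀ y z : ℝ, 0 < y → 0 < z → 0 ≤ K y z)
    (hF_nonneg : ∀ y z : ℝ, 0 < y → 0 < z → 0 ≤ F y z)
    (hK_symm : ∀ y z : ℝ, K y z = K z y) (hF_symm : ∀ y z : ℝ, F y z = F z y)
    (hK_bound : ∀ y z : ℝ, 0 < y → 0 < z → K y z ≤ k₁ * (1 + y + z))
    (hF_bound : ∀ y z : ℝ, 0 < y → 0 < z → F y z ≤ k₂ * (1 + y + z))
    (gin : ℝ → ℝ) (hgin_nonneg : ∀ y, 0 ≤ gin y)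
    (hgin_int : IntegrableOn (fun y => (1 + y) * gin y) (Set.Ioi 0))
    (n : ℕ) (hn : 1 ≤ n)
    (g : ℝ → ℝ → ℝ) (hg_nonneg : ∀ y t, 0 ≤ g y t)
    (hweak : ∀ ω : ℝ → ℝ, Measurable ω → (∃ M : ℝ, ∀ y, |ω y| ≤ M) →
      ∀ t : ℝ, 0 ≤ t →
        (∫ y in Set.Ioo (0:ℝ) (n:ℝ), (g y t - gin y * chi 0 n y) * ω y)
        = (1/2) * (∫ s in Set.Ioo (0:ℝ) t, ∫ y in Set.Ioo (0:ℝ) (n:ℝ),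
              ∫ z in Set.Ioo (0:ℝ) (n:ℝ),
              (ω (y + z) * chi 0 n (y + z) - ω y - ω z) * K y z * g y s * g z s)
          - (1/2) * (∫ s in Set.Ioo (0:ℝ) t, ∫ z in Set.Ioo (0:ℝ) (n:ℝ),
              ∫ y in Set.Ioo (0:ℝ) ((n:ℝ) - z),
              (ω (y + z) - ω y - ω z) * F y z * g (y + z) s)) :
    ∀ t : ℝ, 0 ≤ t →
      (∫ y in Set.Ioo (0:ℝ) (n:ℝ), y * g y t)
      ≤ ∫ y in Set.Ioo (0:ℝ) (n:ℝ), y * (gin y * chi 0 n y) := by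
  intro t ht
  have hn0 : (0:ℝ) < n := by exact_mod_cast Nat.lt_of_lt_of_le Nat.zero_lt_one hn
  by_cases hint : IntegrableOn (fun y => y * g y t) (Set.Ioo (0:ℝ) (n:ℝ))
  · -- main case: use test function ω y = y * chi 0 n y
    set ω : ℝ → ℝ := fun y => y * chi 0 n y with hωdef
    have hωmeas : Measurable ω := measurable_id.mul (chi_measurable 0 n)
    have hωbdd : ∃ M : ℝ, ∀ y, |ω y| ≤ M := by
      refine ⟨n, fun y => ?_⟩
      by_cases h : y ∈ Set.Ioo (0:ℝ) (n:ℝ)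
      · simp only [hωdef, chi_of_mem h, mul_one]
        rw [abs_of_pos h.1]; exact le_of_lt h.2
      · simp only [hωdef, chi, Set.indicator_of_notMem h, mul_zero, abs_zero]
        exact le_of_lt hn0
    have hE := hweak ω hωmeas hωbdd t ht
    -- the fragmentation term vanishes
    have hT2 : (∫ s in Set.Ioo (0:ℝ) t, ∫ z in Set.Ioo (0:ℝ) (n:ℝ),
        ∫ y in Set.Ioo (0:ℝ) ((n:ℝ) - z),
        (ω (y + z) - ω y - ω z) * F y z * g (y + z) s) = 0 := by
      have h0 : ∀ s : ℝ, (∫ z in Set.Ioo (0:ℝ) (n:ℝ),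
          ∫ y in Set.Ioo (0:ℝ) ((n:ℝ) - z),
          (ω (y + z) - ω y - ω z) * F y z * g (y + z) s) = 0 := by
        intro s
        rw [setIntegral_congr_fun measurableSet_Ioo
          (g := fun _ => (0:ℝ)) (fun z hz => ?_), integral_zero]
        rw [setIntegral_congr_fun measurableSet_Ioo
          (g := fun _ => (0:ℝ)) (fun y hy => ?_), integral_zero]
        have hyz : y + z ∈ Set.Ioo (0:ℝ) (n:ℝ) :=
          ⟨add_pos hy.1 hz.1, by linarith [hy.2]⟩
        have hy' : y ∈ Set.Ioo (0:ℝ) (n:ℝ) := ⟨hy.1, by linarith [hy.2, hz.1]⟩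
        have : ω (y + z) - ω y - ω z = 0 := by
          simp only [hωdef, chi_of_mem hyz, chi_of_mem hy', chi_of_mem hz, mul_one]
          ring
        rw [this, zero_mul, zero_mul]
      simp only [h0, integral_zero]
    -- the coagulation term is nonpositive
    have hT1 : (∫ s in Set.Ioo (0:ℝ) t, ∫ y in Set.Ioo (0:ℝ) (n:ℝ),
        ∫ z in Set.Ioo (0:ℝ) (n:ℝ),
        (ω (y + z) * chi 0 n (y + z) - ω y - ω z) * K y z * g y s * g z s) ≤ 0 := by
      refine setIntegral_nonpos measurableSet_Ioo (fun s _ => ?_)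
      refine setIntegral_nonpos measurableSet_Ioo (fun y hy => ?_)
      refine setIntegral_nonpos measurableSet_Ioo (fun z hz => ?_)
      have hfac : ω (y + z) * chi 0 n (y + z) - ω y - ω z ≤ 0 := by
        have h1 : ω (y + z) * chi 0 n (y + z) = (y + z) * chi 0 n (y + z) := by
          simp only [hωdef]
          rw [mul_assoc, chi_sq]
        rw [h1]
        simp only [hωdef, chi_of_mem hy, chi_of_mem hz, mul_one]
        nlinarith [chi_le_one 0 (n:ℝ) (y + z), chi_nonneg 0 (n:ℝ) (y + z),
          hy.1, hz.1, add_pos hy.1 hz.1]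
      have hK := hK_nonneg y z hy.1 hz.1
      have hg1 := hg_nonneg y s
      have hg2 := hg_nonneg z s
      have : (ω (y + z) * chi 0 n (y + z) - ω y - ω z) * K y z ≤ 0 :=
        mul_nonpos_of_nonpos_of_nonneg hfac hK
      exact mul_nonpos_of_nonpos_of_nonneg
        (mul_nonpos_of_nonpos_of_nonneg this hg1) hg2
    -- integrability of the initial-moment integrand
    have hint2 : IntegrableOn (fun y => y * (gin y * chi 0 n y)) (Set.Ioo (0:ℝ) (n:ℝ)) := by
      have hh : IntegrableOn (fun y => (1 + y) * gin y) (Set.Ioo (0:ℝ) (n:ℝ)) :=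
        hgin_int.mono_set Set.Ioo_subset_Ioi_self
      set φ : ℝ → ℝ := fun y => y * chi 0 n y / (1 + y) with hφdef
      have hφmeas : Measurable φ :=
        (measurable_id.mul (chi_measurable 0 n)).div (measurable_const.add measurable_id)
      have hφbdd : ∀ y, ‖φ y‖ ≤ 1 := by
        intro y
        by_cases h : y ∈ Set.Ioo (0:ℝ) (n:ℝ)
        · simp only [hφdef, chi_of_mem h, mul_one, Real.norm_eq_abs]
          rw [abs_of_nonneg (div_nonneg (le_of_lt h.1) (by linarith [h.1]))]
          rw [div_le_one (by linarith [h.1])]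
          linarith [h.1]
        · simp only [hφdef, chi, Set.indicator_of_notMem h, mul_zero, zero_div,
            norm_zero]
          exact zero_le_one
      have hprod : Integrable (fun y => φ y * ((1 + y) * gin y))
          (volume.restrict (Set.Ioo (0:ℝ) (n:ℝ))) :=
        hh.bdd_mul (hφmeas.aestronglyMeasurable) (Filter.Eventually.of_forall hφbdd)
      refine (IntegrableOn.congr_fun hprod (fun y hy => ?_) measurableSet_Ioo)
      have hy1 : (1:ℝ) + y ≠ 0 := by linarith [hy.1]
      simp only [hφdef]
      field_simp
    -- rewrite the left-hand side of the weak formulation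
    have hLHS : (∫ y in Set.Ioo (0:ℝ) (n:ℝ), (g y t - gin y * chi 0 n y) * ω y)
        = (∫ y in Set.Ioo (0:ℝ) (n:ℝ), y * g y t)
          - ∫ y in Set.Ioo (0:ℝ) (n:ℝ), y * (gin y * chi 0 n y) := by
      rw [← integral_sub hint hint2]
      refine setIntegral_congr_fun measurableSet_Ioo (fun y hy => ?_)
      simp only [hωdef, chi_of_mem hy, mul_one]
      ring
    rw [hLHS, hT2] at hE
    have : (∫ y in Set.Ioo (0:ℝ) (n:ℝ), y * g y t)
        - (∫ y in Set.Ioo (0:ℝ) (n:ℝ), y * (gin y * chi 0 n y)) ≤ 0 := by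
      rw [hE]; linarith
    linarith
  · -- degenerate case: the integral of a non-integrable function is 0
    rw [integral_undef hint]
    exact setIntegral_nonneg measurableSet_Ioo (fun y hy =>
      mul_nonneg (le_of_lt hy.1) (mul_nonneg (hgin_nonneg y) (chi_nonneg 0 n y)))
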